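/- For every two-qubit unit vector φ : Fin 2 × Fin 2 → ℂ there exists c ∈ Matrix.unitaryGroup (Fin 2) ℂ with det c = 1 such that ε((CNOT * (1 ⊗ c)).mulVec φ) = 0, i.e. a single one-qubit gate followed by a CNOT disentangles any two-qubit state. -/

import Mathlib

open Matrix Kronecker

noncomputable section

def σy : Matrix (Fin 2) (Fin 2) ℂ := !![0, -Complex.I; Complex.I, 0]

def eps (φ : Fin 2 × Fin 2 → ℂ) : ℂ := φ ⬝ᵥ ((σy ⊗ₖ σy).mulVec φ)

def CNOT : Matrix (Fin 2 × Fin 2) (Fin 2 × Fin 2) ℂ :=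
  Matrix.of fun p q => if p.1 = q.1 ∧ p.2 = q.1 + q.2 then 1 else 0

def e (i j : Fin 2) : Fin 2 × Fin 2 → ℂ := Pi.single (i, j) 1

def e₀ : Fin 2 × Fin 2 → ℂ := e 0 0

def Rz (θ : ℝ) : Matrix (Fin 2) (Fin 2) ℂ :=
  !![Complex.exp (Complex.I * θ / 2), 0; 0, Complex.exp (-Complex.I * θ / 2)]

def Rx (θ : ℝ) : Matrix (Fin 2) (Fin 2) ℂ :=
  !![(Real.cos (θ / 2) : ℂ), Complex.I * Real.sin (θ / 2);
     Complex.I * Real.sin (θ / 2), (Real.cos (θ / 2) : ℂ)]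

private lemma eps_key (φ : Fin 2 × Fin 2 → ℂ) (c : Matrix (Fin 2) (Fin 2) ℂ)
    (key : (φ 0 * c 0 0 + φ (0,1) * c 0 1) * (φ (1,0) * c 0 0 + φ 1 * c 0 1)
         = (φ 0 * c 1 0 + φ (0,1) * c 1 1) * (φ (1,0) * c 1 0 + φ 1 * c 1 1)) :
    eps ((CNOT * ((1 : Matrix (Fin 2) (Fin 2) ℂ) ⊗ₖ c)).mulVec φ) = 0 := by
  simp only [eps, σy, CNOT, dotProduct, Matrix.mulVec, Matrix.mul_apply, kroneckerMap_apply,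
    Fintype.sum_prod_type, Fin.sum_univ_two, Matrix.of_apply, Matrix.cons_val', Matrix.cons_val_zero,
    Matrix.cons_val_one, Matrix.head_cons, Matrix.head_fin_const, Matrix.one_apply, Matrix.empty_val',
    show ((0:Fin 2) + 0) = 0 from rfl, show ((0:Fin 2) + 1) = 1 from rfl,
    show ((1:Fin 2) + 0) = 1 from rfl, show ((1:Fin 2) + 1) = 0 from rfl]
  norm_num [Fin.ext_iff, Prod.ext_iff]
  linear_combination -2 * key

theorem disentangle_one_cnot (φ : Fin 2 × Fin 2 → ℂ) (hφ : ∑ p, ‖φ p‖ ^ 2 = 1) :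
    ∃ c ∈ Matrix.unitaryGroup (Fin 2) ℂ, c.det = 1 ∧
      eps ((CNOT * ((1 : Matrix (Fin 2) (Fin 2) ℂ) ⊗ₖ c)).mulVec φ) = 0 := by
  clear hφ
  set a := φ 0 with ha
  set b := φ (0,1) with hb
  set c' := φ (1,0) with hc'
  set d := φ 1 with hd
  set F : ℝ → ℂ := fun t =>
    (a * Real.cos t + b * Real.sin t) * (c' * Real.cos t + d * Real.sin t) with hF
  have hFcont : Continuous F := by fun_prop
  set h : ℝ → ℝ := fun t => ‖F t‖ - ‖F (t + Real.pi/2)‖ with hh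
  have hhcont : Continuous h := by fun_prop
  have hFpi : F (Real.pi/2 + Real.pi/2) = F 0 := by
    rw [show (Real.pi/2 + Real.pi/2 : ℝ) = Real.pi by ring]
    simp only [hF]
    rw [Real.cos_pi, Real.sin_pi, Real.cos_zero, Real.sin_zero]
    push_cast
    ring
  have hneg : h (Real.pi/2) = - h 0 := by
    simp only [hh, hFpi, zero_add]
    ring
  have h0mem : (0:ℝ) ∈ Set.uIcc (h 0) (h (Real.pi/2)) := by
    rw [hneg]
    rcases le_total (h 0) 0 with h1 | h1
    · exact Set.mem_uIcc.mpr (Or.inl ⟨h1, by linarith⟩)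
    · exact Set.mem_uIcc.mpr (Or.inr ⟨by linarith, h1⟩)
  obtain ⟨t, -, ht0⟩ := intermediate_value_uIcc hhcont.continuousOn h0mem
  have hnorm : ‖F t‖ = ‖F (t + Real.pi/2)‖ := by
    have := ht0
    simp only [hh] at this
    linarith
  set u := F t with hu
  set v := F (t + Real.pi/2) with hv
  -- phase
  obtain ⟨z, hz1, hz2⟩ : ∃ z : ℂ, z * (starRingEnd ℂ) z = 1 ∧
      z ^ 2 * u = ((starRingEnd ℂ) z) ^ 2 * v := by
    by_cases hu0 : u = 0
    · have hv0 : v = 0 := by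
        have : ‖v‖ = 0 := by rw [← hnorm, hu0, norm_zero]
        simpa using this
      exact ⟨1, by simp, by simp [hu0, hv0]⟩
    · set w := v / u with hw
      have hwn : ‖w‖ = 1 := by
        rw [hw, norm_div, ← hnorm, div_self (by simpa using hu0)]
      set z := Complex.exp (Complex.I * ((w.arg / 4 : ℝ) : ℂ)) with hz
      have hcz : (starRingEnd ℂ) z = Complex.exp (-(Complex.I * ((w.arg / 4 : ℝ) : ℂ))) := by
        rw [hz, ← Complex.exp_conj]
        congr 1
        simp [Complex.conj_I, map_ofNat]
      have hzz : z * (starRingEnd ℂ) z = 1 := by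
        rw [hcz, ← Complex.exp_add]
        simp
      have hz4 : z ^ 4 = w := by
        rw [hz, ← Complex.exp_nat_mul]
        rw [show ((4:ℕ):ℂ) * (Complex.I * ((w.arg / 4 : ℝ) : ℂ)) = (w.arg : ℂ) * Complex.I by
          push_cast; ring]
        have := Complex.norm_mul_exp_arg_mul_I w
        rw [show ((‖w‖ : ℝ) : ℂ) = 1 by rw [hwn]; norm_num] at this
        simpa using this
      have hvw : v = z ^ 4 * u := by
        rw [hz4, hw, div_mul_cancel₀ v hu0]
      refine ⟨z, hzz, ?_⟩
      rw [hvw]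
      linear_combination (-(z^2 * u) * (1 + z * (starRingEnd ℂ) z)) * hzz
  -- the unitary
  set ct : ℂ := (Real.cos t : ℂ) with hct
  set st : ℂ := (Real.sin t : ℂ) with hst
  have pyth : ct ^ 2 + st ^ 2 = 1 := by
    rw [hct, hst]
    norm_cast
    rw [add_comm]
    exact Real.sin_sq_add_cos_sq t
  set C : Matrix (Fin 2) (Fin 2) ℂ :=
    !![z * ct, z * st; -((starRingEnd ℂ) z) * st, (starRingEnd ℂ) z * ct] with hC
  have hctc : (starRingEnd ℂ) ct = ct := by rw [hct]; exact Complex.conj_ofReal _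
  have hstc : (starRingEnd ℂ) st = st := by rw [hst]; exact Complex.conj_ofReal _
  refine ⟨C, ?_, ?_, ?_⟩
  · rw [Matrix.mem_unitaryGroup_iff, ← Matrix.ext_iff]
    intro i j
    fin_cases i <;> fin_cases j <;>
      simp [hC, Matrix.mul_apply, Fin.sum_univ_two, Matrix.conjTranspose_apply, Matrix.one_apply,
        _root_.map_mul, map_neg, hctc, hstc, Complex.conj_conj] <;>
      first
        | linear_combination (ct^2 + st^2) * hz1 + pyth
        | linear_combination ((starRingEnd ℂ) z * ct * st) * hz1 - ((starRingEnd ℂ) z * ct * st) * hz1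
  · rw [hC, Matrix.det_fin_two_of]
    linear_combination (ct^2 + st^2) * hz1 + pyth
  · apply eps_key
    have hCe : C 0 0 = z * ct ∧ C 0 1 = z * st ∧
        C 1 0 = -((starRingEnd ℂ) z) * st ∧ C 1 1 = (starRingEnd ℂ) z * ct := by
      refine ⟨?_, ?_, ?_, ?_⟩ <;> simp [hC]
    obtain ⟨h00, h01, h10, h11⟩ := hCe
    rw [h00, h01, h10, h11, ← ha, ← hb, ← hc', ← hd]
    have hut : u = (a * ct + b * st) * (c' * ct + d * st) := by
      simp only [hu, hF, hct, hst]
    have hvt : v = (-(a * st) + b * ct) * (-(c' * st) + d * ct) := by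
      simp only [hv, hF, hct, hst]
      rw [Real.cos_add, Real.sin_add, Real.cos_pi_div_two, Real.sin_pi_div_two]
      push_cast
      ring
    linear_combination hz2 - z^2 * hut + ((starRingEnd ℂ) z)^2 * hvt
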